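/- There exists an absolute constant C > 0 such that for every real D ≥ 1: Σ_{D ≤ d₁, d₂ ≤ 8D} 1/lcm(d₁, d₂) ≤ C log(2D), where the sum is over pairs of positive integers d₁, d₂ with D ≤ d₁ ≤ 8D and D ≤ d₂ ≤ 8D. -/

import Mathlib

open Finset

/-- There is an absolute constant `C > 0` such that for every real `D ≥ 1`:
`∑_{D ≤ d₁, d₂ ≤ 8D} 1/lcm(d₁, d₂) ≤ C log(2D)`, the sum being over pairs of
positive integers `d₁, d₂` in `[D, 8D]`. -/
theorem sum_inv_lcm_bound :
    ∃ C : ℝ, 0 < C ∧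
      ∀ D : ℝ, 1 ≤ D →
        ∑ d₁ ∈ (Finset.Icc 1 ⌊8 * D⌋₊).filter
            (fun d : ℕ => D ≤ (d : ℝ) ∧ (d : ℝ) ≤ 8 * D),
          ∑ d₂ ∈ (Finset.Icc 1 ⌊8 * D⌋₊).filter
              (fun d : ℕ => D ≤ (d : ℝ) ∧ (d : ℝ) ≤ 8 * D),
            (1 : ℝ) / (Nat.lcm d₁ d₂ : ℝ) ≤ C * Real.log (2 * D) := by
  refine ⟨640, by norm_num, ?_⟩
  intro D hD
  have hD0 : (0 : ℝ) < D := lt_of_lt_of_le one_pos hD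
  set N : ℕ := ⌊8 * D⌋₊ with hNdef
  set S : Finset ℕ := (Finset.Icc 1 N).filter
      (fun d : ℕ => D ≤ (d : ℝ) ∧ (d : ℝ) ≤ 8 * D) with hSdef
  have hN8 : (N : ℝ) ≤ 8 * D := Nat.floor_le (by positivity)
  have hN1 : 1 ≤ N := by
    have : (1:ℝ) ≤ 8 * D := by linarith
    exact Nat.le_floor (by exact_mod_cast this)
  -- inner sum over multiples of g
  set T : ℕ → ℝ := fun g => ∑ d ∈ S.filter (fun d => g ∣ d), (1 : ℝ) / d with hT
  have hT0 : ∀ g, 0 ≤ T g := by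
    intro g; apply Finset.sum_nonneg; intro d _; positivity
  have hTle : ∀ g ∈ Finset.Icc 1 N, T g ≤ 8 / g := by
    intro g hg
    simp only [Finset.mem_Icc] at hg
    have hg0 : (0:ℝ) < g := by exact_mod_cast hg.1
    have card_le : (S.filter (fun d => g ∣ d)).card ≤ N / g := by
      rw [← Nat.Ioc_filter_dvd_card_eq_div]
      apply Finset.card_le_card
      intro d hd
      simp only [hSdef, Finset.mem_filter, Finset.mem_Icc, Finset.mem_Ioc] at hd ⊢
      exact ⟨⟨by omega, hd.1.1.2⟩, hd.2⟩
    have step1 : T g ≤ (S.filter (fun d => g ∣ d)).card * (1 / D) := by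
      rw [hT]
      refine (Finset.sum_le_card_nsmul _ _ (1/D) ?_).trans (by simp [nsmul_eq_mul])
      intro d hd
      simp only [hSdef, Finset.mem_filter, Finset.mem_Icc] at hd
      exact one_div_le_one_div_of_le hD0 hd.1.2.1
    refine step1.trans ?_
    have h1 : ((S.filter (fun d => g ∣ d)).card : ℝ) ≤ (N / g : ℕ) := by exact_mod_cast card_le
    have h2 : ((N / g : ℕ) : ℝ) ≤ (N : ℝ) / g := by
      rw [le_div_iff₀ hg0]; exact_mod_cast Nat.div_mul_le_self N g
    calc ((S.filter (fun d => g ∣ d)).card : ℝ) * (1/D)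
        ≤ (8*D/g) * (1/D) := by
          apply mul_le_mul_of_nonneg_right _ (by positivity)
          refine h1.trans (h2.trans ?_)
          gcongr
      _ = 8 / g := by field_simp
  -- Step A: pointwise bound by a sum over common divisors
  have hA : ∀ d₁ ∈ S, ∀ d₂ ∈ S, (1:ℝ) / (Nat.lcm d₁ d₂) ≤
      ∑ g ∈ Finset.Icc 1 N,
        (if g ∣ d₁ ∧ g ∣ d₂ then (g : ℝ) / ((d₁:ℝ) * d₂) else 0) := by
    intro d₁ h₁ d₂ h₂
    simp only [hSdef, Finset.mem_filter, Finset.mem_Icc] at h₁ h₂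
    have hd₁ : 1 ≤ d₁ := h₁.1.1
    have hd₂ : 1 ≤ d₂ := h₂.1.1
    have hgcd_mem : Nat.gcd d₁ d₂ ∈ Finset.Icc 1 N := by
      simp only [Finset.mem_Icc]
      refine ⟨Nat.one_le_iff_ne_zero.mpr (Nat.gcd_ne_zero_left (by omega)), ?_⟩
      exact le_trans (Nat.gcd_le_left d₂ (by omega)) h₁.1.2
    have key : (1:ℝ) / (Nat.lcm d₁ d₂) =
        (if Nat.gcd d₁ d₂ ∣ d₁ ∧ Nat.gcd d₁ d₂ ∣ d₂ then
          ((Nat.gcd d₁ d₂ : ℝ)) / ((d₁:ℝ) * d₂) else 0) := by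
      rw [if_pos ⟨Nat.gcd_dvd_left _ _, Nat.gcd_dvd_right _ _⟩]
      have hprod : (Nat.gcd d₁ d₂ : ℝ) * (Nat.lcm d₁ d₂ : ℝ) = (d₁ : ℝ) * d₂ := by
        exact_mod_cast congrArg (Nat.cast : ℕ → ℝ) (Nat.gcd_mul_lcm d₁ d₂)
      have hlcm0 : (0:ℝ) < (Nat.lcm d₁ d₂ : ℝ) := by
        have : 0 < Nat.lcm d₁ d₂ := Nat.pos_of_ne_zero (Nat.lcm_ne_zero (by omega) (by omega))
        exact_mod_cast this
      have hd₁0 : (0:ℝ) < (d₁:ℝ) := by exact_mod_cast hd₁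
      have hd₂0 : (0:ℝ) < (d₂:ℝ) := by exact_mod_cast hd₂
      rw [div_eq_div_iff (by positivity) (by positivity)]
      linarith [hprod]
    rw [key]
    refine Finset.single_le_sum (f := fun g =>
      (if g ∣ d₁ ∧ g ∣ d₂ then (g : ℝ) / ((d₁:ℝ) * d₂) else 0)) ?_ hgcd_mem
    intro g _
    split
    · positivity
    · exact le_rfl
  -- Step B: factorization of the swapped sum
  have hfact : ∀ g : ℕ, ∑ d₁ ∈ S, ∑ d₂ ∈ S,
      (if g ∣ d₁ ∧ g ∣ d₂ then (g : ℝ) / ((d₁:ℝ) * d₂) else 0)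
      = (g : ℝ) * (T g * T g) := by
    intro g
    have hsplit : ∀ d₁ d₂ : ℕ,
        (if g ∣ d₁ ∧ g ∣ d₂ then (g : ℝ) / ((d₁:ℝ) * d₂) else 0)
        = (g:ℝ) * ((if g ∣ d₁ then (1:ℝ)/d₁ else 0) * (if g ∣ d₂ then (1:ℝ)/d₂ else 0)) := by
      intro d₁ d₂
      by_cases h1 : g ∣ d₁ <;> by_cases h2 : g ∣ d₂ <;>
        simp [h1, h2, div_eq_mul_inv, mul_inv] <;> exact Or.inl (mul_comm _ _)
    simp_rw [hsplit, ← Finset.mul_sum]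
    congr 1
    rw [← Finset.sum_mul, hT]
    simp only [← Finset.sum_filter]
  -- Put it together
  have main : ∑ d₁ ∈ S, ∑ d₂ ∈ S, (1:ℝ) / (Nat.lcm d₁ d₂) ≤
      ∑ g ∈ Finset.Icc 1 N, (g:ℝ) * (T g * T g) := by
    calc ∑ d₁ ∈ S, ∑ d₂ ∈ S, (1:ℝ) / (Nat.lcm d₁ d₂)
        ≤ ∑ d₁ ∈ S, ∑ d₂ ∈ S, ∑ g ∈ Finset.Icc 1 N,
            (if g ∣ d₁ ∧ g ∣ d₂ then (g : ℝ) / ((d₁:ℝ) * d₂) else 0) := by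
          apply Finset.sum_le_sum; intro d₁ h₁
          apply Finset.sum_le_sum; intro d₂ h₂
          exact hA d₁ h₁ d₂ h₂
      _ = ∑ g ∈ Finset.Icc 1 N, ∑ d₁ ∈ S, ∑ d₂ ∈ S,
            (if g ∣ d₁ ∧ g ∣ d₂ then (g : ℝ) / ((d₁:ℝ) * d₂) else 0) := by
          rw [show (∑ d₁ ∈ S, ∑ d₂ ∈ S, ∑ g ∈ Finset.Icc 1 N,
              (if g ∣ d₁ ∧ g ∣ d₂ then (g : ℝ) / ((d₁:ℝ) * d₂) else 0))
              = ∑ d₁ ∈ S, ∑ g ∈ Finset.Icc 1 N, ∑ d₂ ∈ S,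
              (if g ∣ d₁ ∧ g ∣ d₂ then (g : ℝ) / ((d₁:ℝ) * d₂) else 0) from
            Finset.sum_congr rfl fun d₁ _ => Finset.sum_comm]
          exact Finset.sum_comm
      _ = ∑ g ∈ Finset.Icc 1 N, (g:ℝ) * (T g * T g) := by
          exact Finset.sum_congr rfl fun g _ => hfact g
  have bound2 : ∑ g ∈ Finset.Icc 1 N, (g:ℝ) * (T g * T g) ≤
      ∑ g ∈ Finset.Icc 1 N, 64 / (g:ℝ) := by
    apply Finset.sum_le_sum
    intro g hg
    have hg1 : 1 ≤ g := (Finset.mem_Icc.mp hg).1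
    have hg0 : (0:ℝ) < g := by exact_mod_cast hg1
    have h8 : T g ≤ 8 / g := hTle g hg
    have : (g:ℝ) * (T g * T g) ≤ (g:ℝ) * ((8/g) * (8/g)) := by
      apply mul_le_mul_of_nonneg_left _ (le_of_lt hg0)
      exact mul_le_mul h8 h8 (hT0 g) (by positivity)
    refine this.trans (le_of_eq ?_)
    field_simp; ring
  have harm : ∑ g ∈ Finset.Icc 1 N, 64 / (g:ℝ) = 64 * (harmonic N : ℝ) := by
    rw [harmonic_eq_sum_Icc]
    push_cast
    rw [Finset.mul_sum]
    exact Finset.sum_congr rfl fun g _ => div_eq_mul_inv 64 _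
  have hlog : (harmonic N : ℝ) ≤ 1 + Real.log N := harmonic_le_one_add_log N
  have hlogN : Real.log N ≤ Real.log (8 * D) := by
    apply Real.log_le_log (by exact_mod_cast hN1) hN8
  have hlog2D : Real.log 2 ≤ Real.log (2 * D) := by
    apply Real.log_le_log (by norm_num) (by linarith)
  have hsplit8 : Real.log (8 * D) = Real.log 4 + Real.log (2 * D) := by
    rw [show (8:ℝ) * D = 4 * (2 * D) by ring, Real.log_mul (by norm_num) (by positivity)]
  have hlog4 : Real.log 4 = 2 * Real.log 2 := by
    rw [show (4:ℝ) = 2^2 by norm_num, Real.log_pow]; push_cast; ring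
  have h2lb : (0.6931471803 : ℝ) < Real.log 2 := Real.log_two_gt_d9
  have h2ub : Real.log 2 < 0.6931471808 := Real.log_two_lt_d9
  calc ∑ d₁ ∈ S, ∑ d₂ ∈ S, (1:ℝ) / (Nat.lcm d₁ d₂)
      ≤ 64 * (harmonic N : ℝ) := by rw [← harm]; exact main.trans bound2
    _ ≤ 64 * (1 + Real.log N) := by linarith
    _ ≤ 64 * (1 + Real.log (8 * D)) := by linarith
    _ ≤ 640 * Real.log (2 * D) := by
        rw [hsplit8, hlog4] at *
        nlinarith [hlog2D, h2lb, h2ub]
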